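/- For every integer n ≥ 2 and every j ∈ {1, …, n−1}, the number of non-primitive Dyck paths of semilength n whose first peak has height 2 and whose last peak has height j equals |D_n(1, j+1)|. -/

import Mathlib

/-- A Dyck word: a list of booleans (`true` = rise, `false` = fall) with equally many
rises and falls such that every prefix has at least as many rises as falls. -/
def IsDyckWord (w : List Bool) : Prop :=
  w.count true = w.count false ∧ ∀ p, p <+: w → p.count false ≤ p.count true

/-- The list of heights of the peaks (occurrences of the factor `rf`) of a word,
from left to right. The height of a peak is the number of rises minus the number
of falls in the prefix ending with the rise of that peak. -/
def peakHeights (w : List Bool) : List ℕ :=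
  (List.range w.length).filterMap (fun k =>
    if w[k]? = some true ∧ w[k + 1]? = some false then
      some ((w.take (k + 1)).count true - (w.take (k + 1)).count false)
    else none)

/-- `DyckD n i j` is the set of Dyck paths of semilength `n` whose first peak has
height `i` and whose last peak has height `j`. -/
def DyckD (n i j : ℕ) : Set (List Bool) :=
  {w | IsDyckWord w ∧ w.count true = n ∧
    (peakHeights w).head? = some i ∧ (peakHeights w).getLast? = some j}
/-- A Dyck word is primitive if every proper nonempty prefix has strictly more
rises than falls, i.e. the path touches the x-axis only at its endpoints. -/
def IsPrimitiveWord (w : List Bool) : Prop :=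
  ∀ p, p <+: w → p ≠ [] → p ≠ w → p.count false < p.count true


-- foundation
lemma aux_len (w : List Bool) : w.length = w.count true + w.count false := by
  induction w with
  | nil => simp
  | cons b t ih =>
    rw [List.count_cons, List.count_cons, List.length_cons, ih]
    cases b <;> simp <;> omega

lemma aux_prefix_cases {p u v : List Bool} (h : p <+: u ++ v) :
    p <+: u ∨ ∃ q, q <+: v ∧ p = u ++ q := by
  have hp : p = (u ++ v).take p.length := (List.prefix_iff_eq_take.mp h)
  by_cases hle : p.length ≤ u.length
  · left
    rw [List.take_append_of_le_length hle] at hp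
    exact hp ▸ List.take_prefix _ _
  · right
    refine ⟨v.take (p.length - u.length), List.take_prefix _ _, ?_⟩
    rw [List.take_append, List.take_of_length_le (by omega)] at hp
    exact hp

lemma aux_prefix_single {a : Bool} {p : List Bool} (h : p <+: [a]) : p = [] ∨ p = [a] := by
  obtain ⟨s, hs⟩ := h
  match p, hs with
  | [], _ => exact Or.inl rfl
  | [b], hs => simp at hs; simp [hs.1]

lemma aux_prefix_pair {a b : Bool} {p : List Bool} (h : p <+: [a, b]) :
    p = [] ∨ p = [a] ∨ p = [a, b] := by
  obtain ⟨s, hs⟩ := h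
  match p, hs with
  | [], _ => exact Or.inl rfl
  | [c], hs => simp at hs; simp [hs.1]
  | [c, d], hs => simp at hs; simp [hs.1, hs.2.1]

lemma aux_prefix_triple {a b c : Bool} {p : List Bool} (h : p <+: [a, b, c]) :
    p = [] ∨ p = [a] ∨ p = [a, b] ∨ p = [a, b, c] := by
  obtain ⟨s, hs⟩ := h
  match p, hs with
  | [], _ => exact Or.inl rfl
  | [d], hs => simp at hs; simp [hs.1]
  | [d, e], hs => simp at hs; simp [hs.1, hs.2.1]
  | [d, e, f], hs => simp at hs; simp [hs.1, hs.2.1, hs.2.2.1]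

lemma aux_peaks_append (u v : List Bool)
    (hb : ¬(u.getLast? = some true ∧ v.head? = some false))
    (hu : u.count false ≤ u.count true)
    (hv : ∀ k : ℕ, v[k]? = some true →
      (v.take (k + 1)).count false ≤ (v.take (k + 1)).count true) :
    peakHeights (u ++ v) =
      peakHeights u ++ (peakHeights v).map (· + (u.count true - u.count false)) := by
  unfold peakHeights
  rw [List.length_append, List.range_add, List.filterMap_append, List.filterMap_map,
    List.map_filterMap]
  congr 1
  · apply List.filterMap_congr
    intro k hk
    rw [List.mem_range] at hk
    have e1 : (u ++ v)[k]? = u[k]? := by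
      rw [List.getElem?_append]; simp [hk]
    by_cases hk1 : k + 1 < u.length
    · have e2 : (u ++ v)[k + 1]? = u[k + 1]? := by
        rw [List.getElem?_append]; simp [hk1]
      rw [e1, e2]
      by_cases hc : u[k]? = some true ∧ u[k + 1]? = some false
      · rw [if_pos hc, if_pos hc, List.take_append_of_le_length (by omega)]
      · rw [if_neg hc, if_neg hc]
    · have hk1' : k + 1 = u.length := by omega
      have hnone : u[k + 1]? = none := by
        rw [List.getElem?_eq_none_iff]; omega
      have e2 : (u ++ v)[k + 1]? = v[0]? := by
        rw [List.getElem?_append_right (by omega)]; congr 1; omega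
      rw [e1, e2, hnone]
      have hcr : ¬(u[k]? = some true ∧ (none : Option Bool) = some false) := by
        simp
      rw [if_neg hcr]
      by_cases hut : u[k]? = some true
      · have hlast : u.getLast? = some true := by
          rw [List.getLast?_eq_getElem?]
          rwa [show u.length - 1 = k by omega]
        have hvh : v.head? ≠ some false := fun hvf => hb ⟨hlast, hvf⟩
        rw [if_neg]
        rintro ⟨_, hv0⟩
        exact hvh (by rw [List.head?_eq_getElem?]; exact hv0)
      · rw [if_neg (fun hc => hut hc.1)]
  · apply List.filterMap_congr
    intro k hk
    rw [List.mem_range] at hk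
    simp only [Function.comp]
    have e1 : (u ++ v)[u.length + k]? = v[k]? := by
      rw [List.getElem?_append_right (by omega)]; congr 1; omega
    have e2 : (u ++ v)[u.length + k + 1]? = v[k + 1]? := by
      rw [List.getElem?_append_right (by omega)]; congr 1; omega
    rw [e1, e2]
    by_cases hc : v[k]? = some true ∧ v[k + 1]? = some false
    · rw [if_pos hc, if_pos hc]
      have ht : (u ++ v).take (u.length + k + 1) = u ++ v.take (k + 1) := by
        rw [show u.length + k + 1 = u.length + (k + 1) by omega, List.take_length_add_append]
      rw [ht, Option.map_some]
      congr 1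
      have hvk := hv k hc.1
      simp only [List.count_append]
      omega
    · rw [if_neg hc, if_neg hc, Option.map_none]

-- head of a filterMap over a range
lemma aux_fm_head : ∀ (L : ℕ) (g : ℕ → Option ℕ) (x : ℕ),
    ((List.range L).filterMap g).head? = some x →
    ∃ k, k < L ∧ g k = some x ∧ ∀ i, i < k → g i = none := by
  intro L
  induction L with
  | zero => intro g x h; simp at h
  | succ L ih =>
    intro g x h
    rw [List.range_succ_eq_map, List.filterMap_cons, List.filterMap_map] at h
    cases hg0 : g 0 with
    | some y =>
      rw [hg0] at h
      simp at h
      exact ⟨0, by omega, by rw [hg0, h], fun i hi => absurd hi (by omega)⟩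
    | none =>
      rw [hg0] at h
      obtain ⟨k, hk, hgk, hnone⟩ := ih (g ∘ Nat.succ) x h
      refine ⟨k + 1, by omega, hgk, fun i hi => ?_⟩
      cases i with
      | zero => exact hg0
      | succ i => exact hnone i (by omega)

-- a good word whose head is false is impossible; general facts
lemma aux_good_head {w : List Bool}
    (hg : ∀ p, p <+: w → p.count false ≤ p.count true) : w.head? ≠ some false := by
  intro h
  cases w with
  | nil => simp at h
  | cons b t =>
    simp at h
    subst h
    have := hg [false] ⟨t, rfl⟩
    simp at this

lemma aux_dyck_head {w : List Bool} (hw : IsDyckWord w) (hne : w ≠ []) :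
    w.head? = some true := by
  cases w with
  | nil => exact absurd rfl hne
  | cons b t =>
    cases b
    · exact absurd rfl (aux_good_head hw.2)
    · rfl

lemma aux_dyck_last {w : List Bool} (hw : IsDyckWord w) : w.getLast? ≠ some true := by
  intro h
  have hne : w ≠ [] := by rintro rfl; simp at h
  have hlast : w.getLast hne = true := by
    rw [List.getLast?_eq_getLast hne] at h; exact Option.some.inj h
  have hw2 : w = w.dropLast ++ [true] := by
    conv_lhs => rw [← List.dropLast_append_getLast hne]
    rw [hlast]
  have hp := hw.2 w.dropLast (List.dropLast_prefix w)
  have hc := hw.1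
  rw [hw2] at hc
  simp [List.count_append] at hc
  omega

lemma aux_dyck_last' {w : List Bool} (hw : IsDyckWord w) (hne : w ≠ []) :
    w.getLast? = some false := by
  cases hl : w.getLast? with
  | none => rw [List.getLast?_eq_none_iff] at hl; exact absurd hl hne
  | some b =>
    cases b
    · rfl
    · exact absurd hl (aux_dyck_last hw)

-- first false index structure: a good word with a false somewhere starts t^i f where
-- i is the first peak height
lemma aux_firstpeak {w : List Bool} (hw : IsDyckWord w) (hf : false ∈ w) {i : ℕ}
    (hh : (peakHeights w).head? = some i) :
    w = List.replicate i true ++ false :: w.drop (i + 1) := by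
  obtain ⟨k0, hk0L, hgk0, hnone⟩ := aux_fm_head _ _ _ hh
  -- extract the condition from hgk0
  have hcond : w[k0]? = some true ∧ w[k0 + 1]? = some false := by
    by_contra hc
    rw [if_neg hc] at hgk0
    exact nomatch hgk0
  have hval : (w.take (k0 + 1)).count true - (w.take (k0 + 1)).count false = i := by
    rw [if_pos hcond] at hgk0
    exact Option.some_injective _ hgk0
  -- first false index
  have hfe : ∃ m : ℕ, w[m]? = some false := by
    obtain ⟨m, hm, he⟩ := List.getElem_of_mem hf
    exact ⟨m, by rw [List.getElem?_eq_getElem hm]; rw [he]⟩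
  classical
  let i0 := Nat.find hfe
  have hi0 : w[i0]? = some false := Nat.find_spec hfe
  have hi0min : ∀ m : ℕ, m < i0 → ¬ w[m]? = some false := fun m hm => Nat.find_min hfe hm
  have htrue : ∀ m, m < i0 → w[m]? = some true := by
    intro m hm
    have hlt : m < w.length := by
      have : i0 < w.length := by
        by_contra hc
        rw [List.getElem?_eq_none_iff.mpr (by omega)] at hi0
        exact nomatch hi0
      omega
    cases hb : w[m]? with
    | none => rw [List.getElem?_eq_none_iff] at hb; omega
    | some b =>
      cases b
      · exact absurd hb (hi0min m hm)
      · rfl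
  -- i0 ≥ 1
  have hi0pos : 1 ≤ i0 := by
    rcases Nat.eq_zero_or_pos i0 with h0 | h
    · exfalso
      apply aux_good_head hw.2
      rw [List.head?_eq_getElem?, ← h0]
      exact hi0
    · exact h
  -- i0 = k0 + 1
  have hi0k : i0 = k0 + 1 := by
    have hle : i0 ≤ k0 + 1 := Nat.find_le hcond.2
    by_contra hne
    have hlt : i0 ≤ k0 := by omega
    have h1 : w[i0 - 1]? = some true := htrue _ (by omega)
    have h2 : w[(i0 - 1) + 1]? = some false := by
      rw [show i0 - 1 + 1 = i0 by omega]; exact hi0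
    have := hnone (i0 - 1) (by omega)
    rw [if_pos ⟨h1, h2⟩] at this
    exact nomatch this
  -- take (k0+1) w is all trues
  have htake : w.take (k0 + 1) = List.replicate (k0 + 1) true := by
    apply List.ext_getElem?
    intro m
    by_cases hm : m < k0 + 1
    · rw [List.getElem?_take_of_lt hm, List.getElem?_replicate]
      rw [if_pos hm]
      exact htrue m (by omega)
    · rw [List.getElem?_eq_none_iff.mpr, List.getElem?_eq_none_iff.mpr]
      · simp; omega
      · simp; omega
  have hi : i = k0 + 1 := by
    rw [htake] at hval
    simp [List.count_replicate] at hval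
    omega
  have hi0len : i0 < w.length := by
    by_contra hc
    rw [List.getElem?_eq_none_iff.mpr (by omega)] at hi0
    exact nomatch hi0
  have hk0len : k0 + 1 < w.length := by omega
  have hsplit : w = w.take (k0 + 1) ++ w.drop (k0 + 1) := (List.take_append_drop _ _).symm
  rw [hi]
  conv_lhs => rw [hsplit]
  rw [htake]
  congr 1
  rw [List.drop_eq_getElem_cons hk0len]
  congr 1
  have h2 := hcond.2
  rw [List.getElem?_eq_getElem hk0len] at h2
  exact Option.some.inj h2

lemma aux_peaks_ne_nil {w : List Bool} (hw : IsDyckWord w) (hne : w ≠ []) :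
    peakHeights w ≠ [] := by
  have hcf : 0 < w.count false := by
    have hl := aux_len w
    have := hw.1
    have : 0 < w.length := List.length_pos_of_ne_nil hne
    omega
  have hf : false ∈ w := List.count_pos_iff.mp hcf
  have hfe : ∃ m : ℕ, w[m]? = some false := by
    obtain ⟨m, hm, he⟩ := List.getElem_of_mem hf
    exact ⟨m, by rw [List.getElem?_eq_getElem hm]; rw [he]⟩
  classical
  let i0 := Nat.find hfe
  have hi0 : w[i0]? = some false := Nat.find_spec hfe
  have hi0min : ∀ m : ℕ, m < i0 → ¬ w[m]? = some false := fun m hm => Nat.find_min hfe hm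
  have hi0len : i0 < w.length := by
    by_contra hc
    rw [List.getElem?_eq_none_iff.mpr (by omega)] at hi0
    exact nomatch hi0
  have hi0pos : 1 ≤ i0 := by
    rcases Nat.eq_zero_or_pos i0 with h0 | h
    · exfalso
      have h00 : w[0]? = some false := by rw [← h0]; exact hi0
      cases w with
      | nil => exact hne rfl
      | cons b t =>
        simp at h00
        subst h00
        have h1 := hw.2 [false] ⟨t, rfl⟩
        simp at h1
    · exact h
  have htm : w[i0 - 1]? = some true := by
    cases hb : w[i0 - 1]? with
    | none => rw [List.getElem?_eq_none_iff] at hb; omega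
    | some b =>
      cases b
      · exact absurd hb (hi0min _ (by omega))
      · rfl
  intro hc
  rw [peakHeights, List.filterMap_eq_nil_iff] at hc
  have := hc (i0 - 1) (by rw [List.mem_range]; omega)
  rw [if_pos ⟨htm, by rw [show i0 - 1 + 1 = i0 by omega]; exact hi0⟩] at this
  exact nomatch this

-- base values
lemma aux_p_ttf : peakHeights [true, true, false] = [2] := by decide
lemma aux_p_tf : peakHeights [true, false] = [1] := by decide
lemma aux_p_t : peakHeights [true] = [] := by decide
lemma aux_p_f : peakHeights [false] = [] := by decide

-- peaks (B ++ [false]) = peaks B for a Dyck word B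
lemma aux_peaks_Bf {B : List Bool} (hB : IsDyckWord B) :
    peakHeights (B ++ [false]) = peakHeights B := by
  rw [aux_peaks_append B [false]
    (by rintro ⟨h1, _⟩; exact aux_dyck_last hB h1)
    (le_of_eq hB.1.symm)
    (by intro k hk
        cases k with
        | zero => simp at hk
        | succ k => simp at hk)]
  simp [aux_p_f]

-- peaks ([true] ++ B ++ [false]) = peaks B + 1, for nonempty Dyck B
lemma aux_peaks_mid {B : List Bool} (hB : IsDyckWord B) (hne : B ≠ []) :
    peakHeights ([true] ++ (B ++ [false])) = (peakHeights B).map (· + 1) := by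
  rw [aux_peaks_append [true] (B ++ [false])
    (by rintro ⟨_, h2⟩
        rw [List.head?_append, aux_dyck_head hB hne] at h2
        simp at h2)
    (by simp)
    ?_]
  · simp [aux_p_t, aux_peaks_Bf hB]
  · intro k hk
    have hkB : k < B.length := by
      by_contra hc
      rw [List.getElem?_append_right (by omega)] at hk
      rcases Nat.lt_or_ge (k - B.length) 1 with h | h
      · interval_cases h : (k - B.length) <;> simp_all
      · rw [List.getElem?_eq_none_iff.mpr (by simpa using h)] at hk
        exact nomatch hk
    rw [List.take_append_of_le_length (by omega)]
    exact hB.2 _ (List.take_prefix _ _)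

lemma aux_last_tfC {C : List Bool} (hC : IsDyckWord C) :
    ([true, false] ++ C).getLast? = some false := by
  rw [List.getLast?_append]
  cases hne : C.getLast? with
  | none => rfl
  | some b =>
    cases b
    · rfl
    · exact absurd hne (aux_dyck_last hC)

lemma aux_good_take {w : List Bool}
    (hg : ∀ p, p <+: w → p.count false ≤ p.count true) (k : ℕ) :
    (w.take k).count false ≤ (w.take k).count true :=
  hg _ (List.take_prefix _ _)

lemma aux_peaks_F {C B : List Bool} (hC : IsDyckWord C) (hB : IsDyckWord B) :
    peakHeights (([true, true, false] ++ (C ++ [false])) ++ B)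
      = (2 :: (peakHeights C).map (· + 1)) ++ peakHeights B := by
  have hv1 : ∀ k : ℕ, (C ++ [false])[k]? = some true →
      ((C ++ [false]).take (k + 1)).count false ≤ ((C ++ [false]).take (k + 1)).count true := by
    intro k hk
    have hkC : k < C.length := by
      by_contra hc
      rw [List.getElem?_append_right (by omega)] at hk
      rcases Nat.lt_or_ge (k - C.length) 1 with h | h
      · interval_cases h : (k - C.length) <;> simp_all
      · rw [List.getElem?_eq_none_iff.mpr (by simpa using h)] at hk
        exact nomatch hk
    rw [List.take_append_of_le_length (by omega)]
    exact aux_good_take hC.2 _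
  have hu1 : peakHeights ([true, true, false] ++ (C ++ [false]))
      = 2 :: (peakHeights C).map (· + 1) := by
    rw [aux_peaks_append [true, true, false] (C ++ [false])
      (by rintro ⟨h, -⟩; exact absurd h (by decide)) (by decide) hv1]
    rw [aux_peaks_Bf hC, aux_p_ttf]
    norm_num
  rw [aux_peaks_append ([true, true, false] ++ (C ++ [false])) B
    (by rintro ⟨h, -⟩; rw [List.getLast?_append, List.getLast?_append] at h; simp at h)
    (by have := hC.1; simp [List.count_append]; omega)
    (fun k _ => aux_good_take hB.2 _), hu1]
  have hδ : ([true, true, false] ++ (C ++ [false])).count true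
      - ([true, true, false] ++ (C ++ [false])).count false = 0 := by
    have := hC.1
    simp [List.count_append]
    omega
  rw [hδ]
  simp

lemma aux_hv_G {B : List Bool} (hB : IsDyckWord B) :
    ∀ k : ℕ, ([true] ++ (B ++ [false]))[k]? = some true →
      (([true] ++ (B ++ [false])).take (k + 1)).count false
        ≤ (([true] ++ (B ++ [false])).take (k + 1)).count true := by
  intro k hk
  cases k with
  | zero => simp
  | succ k =>
    rw [List.getElem?_append_right (by simp)] at hk
    simp only [List.length_singleton, Nat.add_sub_cancel] at hk
    have hkB : k < B.length := by
      by_contra hc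
      rw [List.getElem?_append_right (by omega)] at hk
      rcases Nat.lt_or_ge (k - B.length) 1 with h | h
      · interval_cases h : (k - B.length) <;> simp_all
      · rw [List.getElem?_eq_none_iff.mpr (by simpa using h)] at hk
        exact nomatch hk
    have : ([true] ++ (B ++ [false])).take (k + 1 + 1)
        = [true] ++ (B ++ [false]).take (k + 1) := by
      rw [show k + 1 + 1 = [true].length + (k + 1) by simp; omega, List.take_length_add_append]
    rw [this, List.take_append_of_le_length (by omega)]
    have := aux_good_take hB.2 (k + 1)
    simp [List.count_append]
    omega

lemma aux_peaks_G {C B : List Bool} (hC : IsDyckWord C) (hB : IsDyckWord B) (hne : B ≠ []) :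
    peakHeights (([true, false] ++ C) ++ ([true] ++ (B ++ [false])))
      = (1 :: peakHeights C) ++ (peakHeights B).map (· + 1) := by
  have h1 : peakHeights ([true, false] ++ C) = 1 :: peakHeights C := by
    rw [aux_peaks_append [true, false] C
      (by rintro ⟨h, -⟩; exact absurd h (by decide)) (by decide)
      (fun k _ => aux_good_take hC.2 _), aux_p_tf]
    norm_num
  rw [aux_peaks_append ([true, false] ++ C) ([true] ++ (B ++ [false]))
    (by rintro ⟨h, -⟩; rw [aux_last_tfC hC] at h; simp at h)
    (by have := hC.1; simp [List.count_append]; omega)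
    (aux_hv_G hB), h1, aux_peaks_mid hB hne]
  have hδ : ([true, false] ++ C).count true - ([true, false] ++ C).count false = 0 := by
    have := hC.1
    simp [List.count_append]
    omega
  rw [hδ]
  simp

lemma aux_peaks_G0 {C : List Bool} (hC : IsDyckWord C) :
    peakHeights (([true, false] ++ C) ++ [true, false])
      = (1 :: peakHeights C) ++ [1] := by
  have h1 : peakHeights ([true, false] ++ C) = 1 :: peakHeights C := by
    rw [aux_peaks_append [true, false] C
      (by rintro ⟨h, -⟩; exact absurd h (by decide)) (by decide)
      (fun k _ => aux_good_take hC.2 _), aux_p_tf]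
    norm_num
  rw [aux_peaks_append ([true, false] ++ C) [true, false]
    (by rintro ⟨h, -⟩; rw [aux_last_tfC hC] at h; simp at h)
    (by have := hC.1; simp [List.count_append]; omega)
    ?_, h1, aux_p_tf]
  · have hδ : ([true, false] ++ C).count true - ([true, false] ++ C).count false = 0 := by
      have := hC.1
      simp [List.count_append]
      omega
    rw [hδ]
    simp
  · intro k hk
    cases k with
    | zero => simp
    | succ k =>
      cases k with
      | zero => simp at hk
      | succ k => simp at hk

lemma aux_dyck_F {C B : List Bool} (hC : IsDyckWord C) (hB : IsDyckWord B) :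
    IsDyckWord (([true, true, false] ++ (C ++ [false])) ++ B) := by
  constructor
  · have h1 := hC.1; have h2 := hB.1
    simp [List.count_append]
    omega
  · intro p hp
    rcases aux_prefix_cases hp with h | ⟨q, hq, rfl⟩
    · rcases aux_prefix_cases h with h2 | ⟨q, hq, rfl⟩
      · rcases aux_prefix_triple h2 with rfl | rfl | rfl | rfl <;> simp
      · rcases aux_prefix_cases hq with h3 | ⟨q2, hq2, rfl⟩
        · have := hC.2 _ h3
          simp [List.count_append]
          omega
        · rcases aux_prefix_single hq2 with rfl | rfl <;>
            · have := hC.1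
              simp [List.count_append]
              omega
    · have h4 := hB.2 _ hq
      have h5 := hC.1
      simp [List.count_append]
      omega

lemma aux_dyck_G {C B : List Bool} (hC : IsDyckWord C) (hB : IsDyckWord B) :
    IsDyckWord (([true, false] ++ C) ++ ([true] ++ (B ++ [false]))) := by
  constructor
  · have h1 := hC.1; have h2 := hB.1
    simp [List.count_append]
    omega
  · intro p hp
    rcases aux_prefix_cases hp with h | ⟨q, hq, rfl⟩
    · rcases aux_prefix_cases h with h2 | ⟨q, hq, rfl⟩
      · rcases aux_prefix_pair h2 with rfl | rfl | rfl <;> simp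
      · have := hC.2 _ hq
        simp [List.count_append]
        omega
    · rcases aux_prefix_cases hq with h2 | ⟨q2, hq2, rfl⟩
      · rcases aux_prefix_single h2 with rfl | rfl <;>
          · have := hC.1
            simp [List.count_append]
            omega
      · rcases aux_prefix_cases hq2 with h3 | ⟨q3, hq3, rfl⟩
        · have h4 := hB.2 _ h3
          have h5 := hC.1
          simp [List.count_append]
          omega
        · rcases aux_prefix_single hq3 with rfl | rfl <;>
            · have h4 := hB.1
              have h5 := hC.1
              simp [List.count_append]
              omega

-- injectivity for shape F
lemma aux_sep_lt {C C' X X' : List Bool} (hC : IsDyckWord C) (hg' : ∀ p, p <+: C' → p.count false ≤ p.count true)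
    (h : C ++ ([false] ++ X) = C' ++ ([false] ++ X')) (hlt : C.length < C'.length) : False := by
  have ht : (C ++ ([false] ++ X)).take (C.length + 1) = C ++ [false] := by
    rw [List.take_append, List.take_of_length_le (by omega)]
    congr 1
    rw [show C.length + 1 - C.length = 1 by omega]
    rfl
  have ht' : (C' ++ ([false] ++ X')).take (C.length + 1) = C'.take (C.length + 1) :=
    List.take_append_of_le_length (by omega)
  rw [h, ht'] at ht
  have hpre : C ++ [false] <+: C' := ht ▸ List.take_prefix _ _
  have hgp := hg' _ hpre
  have hc1 := hC.1
  simp [List.count_append] at hgp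
  omega

lemma aux_sep {C C' X X' : List Bool} (hC : IsDyckWord C) (hC' : IsDyckWord C')
    (h : C ++ ([false] ++ X) = C' ++ ([false] ++ X')) : C = C' ∧ X = X' := by
  have hlen : C.length = C'.length := by
    rcases Nat.lt_trichotomy C.length C'.length with hl | he | hl
    · exact absurd (aux_sep_lt hC hC'.2 h hl) id
    · exact he
    · exact absurd (aux_sep_lt hC' hC.2 h.symm hl) id
  obtain ⟨h1, h2⟩ := List.append_inj h hlen
  exact ⟨h1, by simpa using h2⟩

-- injectivity for shape G
lemma aux_take_mid {C B : List Bool} {m : ℕ} (h1 : C.length < m)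
    (h2 : m ≤ C.length + 1 + B.length) :
    (C ++ ([true] ++ (B ++ [false]))).take m
      = C ++ ([true] ++ B.take (m - C.length - 1)) := by
  rw [List.take_append, List.take_of_length_le (by omega)]
  congr 1
  have hm : m - C.length = (m - C.length - 1) + 1 := by omega
  rw [hm]
  show (true :: (B ++ [false])).take ((m - C.length - 1) + 1)
      = true :: B.take (m - C.length - 1)
  rw [List.take_succ_cons, List.take_append_of_le_length (by omega)]

lemma aux_sep2_lt {C C' B B' : List Bool} (hC : IsDyckWord C) (hC' : IsDyckWord C')
    (hB : IsDyckWord B)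
    (h : C ++ ([true] ++ (B ++ [false])) = C' ++ ([true] ++ (B' ++ [false])))
    (hlt : C.length < C'.length) : False := by
  have hlen : C.length + (B.length + 2) = C'.length + (B'.length + 2) := by
    have := congrArg List.length h
    simpa using this
  have ht := congrArg (List.take C'.length) h
  rw [aux_take_mid hlt (by omega), List.take_left] at ht
  have hcnt := congrArg (List.count true) ht
  have hcnf := congrArg (List.count false) ht
  have hq := hB.2 _ (List.take_prefix (C'.length - C.length - 1) B)
  have h1 := hC.1
  have h2 := hC'.1
  simp [List.count_append] at hcnt hcnf
  omega

lemma aux_sep2 {C C' B B' : List Bool} (hC : IsDyckWord C) (hC' : IsDyckWord C')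
    (hB : IsDyckWord B) (hB' : IsDyckWord B')
    (h : C ++ ([true] ++ (B ++ [false])) = C' ++ ([true] ++ (B' ++ [false]))) :
    C = C' ∧ B = B' := by
  have hlen : C.length = C'.length := by
    rcases Nat.lt_trichotomy C.length C'.length with hl | he | hl
    · exact absurd (aux_sep2_lt hC hC' hB h hl) id
    · exact he
    · exact absurd (aux_sep2_lt hC' hC hB' h.symm hl) id
  obtain ⟨h1, h2⟩ := List.append_inj h hlen
  refine ⟨h1, ?_⟩
  simp only [List.cons_append] at h2
  have h3 : B ++ [false] = B' ++ [false] := by simpa using h2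
  exact (List.append_inj' h3 rfl).1

set_option maxHeartbeats 1000000 in
/-- For `n ≥ 2` and `j ∈ {1, …, n−1}`, the number of non-primitive
Dyck paths of semilength `n` whose first peak has height `2` and whose last peak has
height `j` equals `|D_n(1, j+1)|`. -/
theorem nonprimitive_count_eq (n : ℕ) (hn : 2 ≤ n) (j : ℕ) (hj : j ∈ Finset.Icc 1 (n - 1)) :
    {w | w ∈ DyckD n 2 j ∧ ¬ IsPrimitiveWord w}.ncard = (DyckD n 1 (j + 1)).ncard := by
  classical
  rw [Finset.mem_Icc] at hj
  set P : Set (List Bool × List Bool) :=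
    {cb | IsDyckWord cb.1 ∧ IsDyckWord cb.2 ∧ cb.2 ≠ [] ∧
      (peakHeights cb.2).getLast? = some j ∧
      cb.1.count true + cb.2.count true = n - 2} with hPdef
  have hFeq : {w | w ∈ DyckD n 2 j ∧ ¬ IsPrimitiveWord w}
      = (fun cb : List Bool × List Bool =>
          ([true, true, false] ++ (cb.1 ++ [false])) ++ cb.2) '' P := by
    ext w
    simp only [Set.mem_setOf_eq, Set.mem_image, DyckD]
    constructor
    · rintro ⟨⟨hdy, hcnt, hhead, hlast⟩, hnp⟩
      have hlenw : w.length = 2 * n := by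
        have h1 := aux_len w
        have h2 := hdy.1
        omega
      have hfmem : false ∈ w := by
        apply List.count_pos_iff.mp
        have := hdy.1
        omega
      have hw3 := aux_firstpeak hdy hfmem hhead
      have hw3' : w = [true, true, false] ++ w.drop 3 := by
        conv_lhs => rw [hw3]
        rfl
      rw [IsPrimitiveWord] at hnp
      push_neg at hnp
      obtain ⟨p0, hp0pre, hp0ne, hp0neq, hp0cnt⟩ := hnp
      have hp0len : p0.length < w.length := by
        rcases Nat.lt_or_ge p0.length w.length with h | h
        · exact h
        · exact absurd (List.IsPrefix.eq_of_length hp0pre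
            (le_antisymm hp0pre.length_le h)) hp0neq
      have hQ : ∃ m : ℕ, 0 < m ∧ m < w.length ∧
          (w.take m).count true = (w.take m).count false := by
        refine ⟨p0.length, List.length_pos_iff.mpr hp0ne, hp0len, ?_⟩
        have hp0take : w.take p0.length = p0 := (List.prefix_iff_eq_take.mp hp0pre).symm
        rw [hp0take]
        have := hdy.2 p0 hp0pre
        omega
      obtain ⟨hm0, hmlen, hmbal⟩ := Nat.find_spec hQ
      set m := Nat.find hQ with hmdef
      have hmmin : ∀ m' : ℕ, m' < m →
          ¬(0 < m' ∧ m' < w.length ∧ (w.take m').count true = (w.take m').count false) :=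
        fun m' h => Nat.find_min hQ h
      have hm4 : 4 ≤ m := by
        have h1 : m ≠ 1 := by
          intro h
          rw [h, hw3'] at hmbal
          simp at hmbal
        have h2 : m ≠ 2 := by
          intro h
          rw [h, hw3'] at hmbal
          simp at hmbal
        have h3 : m ≠ 3 := by
          intro h
          rw [h, hw3'] at hmbal
          simp at hmbal
        omega
      set C := (w.drop 3).take (m - 4) with hCdef
      set B := w.drop m with hBdef
      have hClen : C.length ≤ m - 4 := by
        rw [hCdef]
        simp
      -- the first m-1 characters
      have ht1 : w.take (m - 1) = [true, true, false] ++ C := by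
        conv_lhs => rw [hw3']
        rw [List.take_append,
          List.take_of_length_le (by simp; omega)]
        have he : m - 1 - ([true, true, false] : List Bool).length = m - 4 := by
          simp
          omega
        rw [he]
      have hgoodp : ∀ q, q <+: w.take m → q.count false ≤ q.count true :=
        fun q hq => hdy.2 q (hq.trans (List.take_prefix _ _))
      have hdyp : IsDyckWord (w.take m) := ⟨hmbal, hgoodp⟩
      have hlen_take : (w.take m).length = m := by
        simp
        omega
      have hpne : w.take m ≠ [] := by
        intro h
        have := congrArg List.length h
        rw [hlen_take] at this
        simp at this
        omega
      have hpw : w.take m = [true, true, false] ++ (C ++ [false]) := by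
        have hlastp : (w.take m).getLast? = some false := aux_dyck_last' hdyp hpne
        have hgl : (w.take m).getLast hpne = false := by
          rw [List.getLast?_eq_getLast hpne] at hlastp
          exact Option.some.inj hlastp
        have hsplit : w.take m = (w.take m).dropLast ++ [false] := by
          conv_lhs => rw [← List.dropLast_append_getLast hpne]
          rw [hgl]
        have hdl : (w.take m).dropLast = w.take (m - 1) := by
          rw [List.dropLast_eq_take, hlen_take, List.take_take]
          congr 1
          omega
        rw [hsplit, hdl, ht1, List.append_assoc]
      have hwFB : w = ([true, true, false] ++ (C ++ [false])) ++ B := by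
        conv_lhs => rw [← List.take_append_drop m w]
        rw [hpw]
      have hC : IsDyckWord C := by
        constructor
        · have hb := hmbal
          rw [hpw] at hb
          simp [List.count_append] at hb
          omega
        · intro q hq
          have hqlen : q.length ≤ m - 4 := le_trans hq.length_le hClen
          have hpre : [true, true, false] ++ q <+: w := by
            have h1 : [true, true, false] ++ q <+: [true, true, false] ++ C := by
              obtain ⟨s, hs⟩ := hq
              exact ⟨s, by rw [List.append_assoc, hs]⟩
            exact h1.trans (ht1 ▸ List.take_prefix (m - 1) w)
          have htake_q : w.take (3 + q.length) = [true, true, false] ++ q := by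
            rw [show (3 : ℕ) + q.length = ([true, true, false] ++ q).length by
              simp [List.length_append]; omega]
            exact (List.prefix_iff_eq_take.mp hpre).symm
          have hnb := hmmin (3 + q.length) (by omega)
          have hne : ¬ (w.take (3 + q.length)).count true
              = (w.take (3 + q.length)).count false := by
            intro h
            exact hnb ⟨by omega, by omega, h⟩
          have hgood := hdy.2 _ hpre
          rw [htake_q] at hne
          simp [List.count_append] at hne hgood
          omega
      have hB : IsDyckWord B := by
        constructor
        · have h1 := hdy.1
          rw [hwFB] at h1
          have h2 := hC.1
          simp [List.count_append] at h1
          omega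
        · intro q hq
          have hpre : w.take m ++ q <+: w := by
            conv_rhs => rw [← List.take_append_drop m w]
            obtain ⟨s, hs⟩ := hq
            refine ⟨s, ?_⟩
            rw [List.append_assoc, hs, hBdef]
          have hgood := hdy.2 _ hpre
          simp [List.count_append] at hgood
          omega
      have hBne : B ≠ [] := by
        intro h
        have := congrArg List.length h
        simp [hBdef] at this
        omega
      have hpeaks : peakHeights w = (2 :: (peakHeights C).map (· + 1)) ++ peakHeights B := by
        conv_lhs => rw [hwFB]
        exact aux_peaks_F hC hB
      have hpBne := aux_peaks_ne_nil hB hBne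
      have hBlast : (peakHeights B).getLast? = some j := by
        cases hgl : (peakHeights B).getLast? with
        | none => exact absurd (List.getLast?_eq_none_iff.mp hgl) hpBne
        | some y =>
          rw [hpeaks, List.getLast?_append, hgl] at hlast
          simpa using hlast
      refine ⟨(C, B), ⟨hC, hB, hBne, hBlast, ?_⟩, hwFB.symm⟩
      show List.count true C + List.count true B = n - 2
      have h1 := hcnt
      rw [hwFB] at h1
      simp [List.count_append] at h1
      omega
    · rintro ⟨⟨C, B⟩, ⟨hC, hB, hBne, hBlast, hcnt⟩, rfl⟩
      have hC' : IsDyckWord C := hC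
      have hB' : IsDyckWord B := hB
      have hBne' : B ≠ [] := hBne
      have hBlast' : (peakHeights B).getLast? = some j := hBlast
      have hcnt' : List.count true C + List.count true B = n - 2 := hcnt
      clear hC hB hBne hBlast hcnt
      refine ⟨⟨aux_dyck_F hC' hB', ?_, ?_, ?_⟩, ?_⟩
      · simp [List.count_append]
        omega
      · rw [aux_peaks_F hC' hB']
        rfl
      · rw [aux_peaks_F hC' hB', List.getLast?_append, hBlast']
        rfl
      · intro hprim
        have hne2 : ([true, true, false] ++ (C ++ [false]))
            ≠ ([true, true, false] ++ (C ++ [false])) ++ B := by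
          intro he
          apply hBne'
          have hl := congrArg List.length he
          simp only [List.length_append] at hl
          exact List.eq_nil_of_length_eq_zero (by omega)
        have hpr := hprim ([true, true, false] ++ (C ++ [false])) ⟨B, rfl⟩ (by simp) hne2
        have h1 := hC'.1
        simp [List.count_append] at hpr
        omega
  have hGeq : DyckD n 1 (j + 1)
      = (fun cb : List Bool × List Bool =>
          ([true, false] ++ cb.1) ++ ([true] ++ (cb.2 ++ [false]))) '' P := by
    ext w
    simp only [Set.mem_setOf_eq, Set.mem_image, DyckD]
    constructor
    · rintro ⟨hdy, hcnt, hhead, hlast⟩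
      have hlenw : w.length = 2 * n := by
        have h1 := aux_len w
        have h2 := hdy.1
        omega
      have hfmem : false ∈ w := by
        apply List.count_pos_iff.mp
        have := hdy.1
        omega
      have hw2 := aux_firstpeak hdy hfmem hhead
      have hw2' : w = [true, false] ++ w.drop 2 := by
        conv_lhs => rw [hw2]
        rfl
      set D := w.drop 2 with hDdef
      have hD : IsDyckWord D := by
        constructor
        · have h1 := hdy.1
          rw [hw2'] at h1
          simp [List.count_append] at h1
          omega
        · intro q hq
          have hpre : [true, false] ++ q <+: w := by
            rw [hw2']
            obtain ⟨s, hs⟩ := hq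
            exact ⟨s, by rw [List.append_assoc, hs]⟩
          have := hdy.2 _ hpre
          simp [List.count_append] at this
          omega
      have hDlen : D.length = 2 * n - 2 := by
        rw [hDdef]
        simp
        omega
      have hDne : D ≠ [] := by
        intro h
        have := congrArg List.length h
        rw [hDlen] at this
        simp at this
        omega
      have hR0 : 0 < D.length ∧ (D.take 0).count true = (D.take 0).count false :=
        ⟨List.length_pos_iff.mpr hDne, by simp⟩
      set m := Nat.findGreatest
        (fun m => m < D.length ∧ (D.take m).count true = (D.take m).count false)
        D.length with hmdef
      have hm : m < D.length ∧ (D.take m).count true = (D.take m).count false := by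
        exact Nat.findGreatest_spec
          (P := fun m => m < D.length ∧ (D.take m).count true = (D.take m).count false)
          (Nat.zero_le D.length) hR0
      have hmax : ∀ m', m < m' → m' ≤ D.length →
          ¬(m' < D.length ∧ (D.take m').count true = (D.take m').count false) := by
        intro m' h1 h2
        exact Nat.findGreatest_is_greatest
          (P := fun m => m < D.length ∧ (D.take m).count true = (D.take m).count false)
          h1 h2
      set C := D.take m with hCdef
      set E := D.drop m with hEdef
      have hDCE : D = C ++ E := (List.take_append_drop m D).symm
      have hC : IsDyckWord C :=
        ⟨hm.2, fun q hq => hD.2 q (hq.trans (List.take_prefix _ _))⟩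
      have hElen : E.length = D.length - m := by
        rw [hEdef]
        simp
      have hEne : E ≠ [] := by
        intro h
        have := congrArg List.length h
        rw [hElen] at this
        simp at this
        have := hm.1
        omega
      have hstrict : ∀ i : ℕ, 0 < i → i < E.length →
          (E.take i).count false < (E.take i).count true := by
        intro i h0 hi
        have htk : D.take (m + i) = C ++ E.take i := by
          rw [hCdef, hEdef, List.take_add]
        have hlt : m + i < D.length := by omega
        have hnR := hmax (m + i) (by omega) (by omega)
        have hne : ¬ (D.take (m + i)).count true = (D.take (m + i)).count false :=
          fun h => hnR ⟨hlt, h⟩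
        have hgood := hD.2 _ (List.take_prefix (m + i) D)
        rw [htk] at hne hgood
        have hc1 := hC.1
        simp [List.count_append] at hne hgood
        omega
      have hE1 : E.count true = E.count false := by
        have h1 := hD.1
        rw [hDCE] at h1
        have := hC.1
        simp [List.count_append] at h1
        omega
      have hE : IsDyckWord E := by
        refine ⟨hE1, ?_⟩
        intro q hq
        rcases Nat.lt_or_ge q.length E.length with hlt | hge
        · rcases Nat.eq_zero_or_pos q.length with h0 | h0
          · rw [List.eq_nil_of_length_eq_zero h0]
            simp
          · have hqt : q = E.take q.length := List.prefix_iff_eq_take.mp hq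
            rw [hqt]
            exact (hstrict _ h0 hlt).le
        · rw [List.IsPrefix.eq_of_length hq (le_antisymm hq.length_le hge)]
          exact le_of_eq hE1.symm
      have hlenE2 : 2 ≤ E.length := by
        have h1 := aux_len E
        have h2 : 0 < E.length := List.length_pos_iff.mpr hEne
        omega
      obtain ⟨e0, E1, hEc⟩ := List.exists_cons_of_ne_nil hEne
      have he0 : e0 = true := by
        have hs := hstrict 1 one_pos (by omega)
        rw [hEc] at hs
        cases e0
        · simp at hs
        · rfl
      rw [he0] at hEc
      have hE1ne : E1 ≠ [] := by
        intro h
        rw [h] at hEc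
        rw [hEc] at hlenE2
        simp at hlenE2
      set B := E1.dropLast with hBdef
      have hE1B : E1 = B ++ [false] := by
        have hgE : E.getLast? = some false := aux_dyck_last' hE hEne
        have hgE1 : E1.getLast? = some false := by
          obtain ⟨e1, E2, hE1c⟩ := List.exists_cons_of_ne_nil hE1ne
          rw [hEc, hE1c, List.getLast?_cons_cons] at hgE
          rw [hE1c]
          exact hgE
        have hglE1 : E1.getLast hE1ne = false := by
          rw [List.getLast?_eq_getLast hE1ne] at hgE1
          exact Option.some.inj hgE1
        conv_lhs => rw [← List.dropLast_append_getLast hE1ne]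
        rw [hglE1, hBdef]
      have hB : IsDyckWord B := by
        constructor
        · have h1 := hE1
          rw [hEc, hE1B] at h1
          simp [List.count_append, List.count_cons] at h1
          omega
        · intro q hq
          have hqlen : q.length ≤ B.length := hq.length_le
          have hE1len : E1.length = B.length + 1 := by
            rw [hE1B]
            simp
          have hElen2 : E.length = B.length + 2 := by
            rw [hEc, List.length_cons, hE1len]
          have hpre : true :: q <+: E := by
            rw [hEc]
            obtain ⟨s, hs⟩ := hq
            refine ⟨s ++ [false], ?_⟩
            show true :: (q ++ (s ++ [false])) = true :: E1
            rw [hE1B, ← hs, List.append_assoc]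
          have hs1 := hstrict (1 + q.length) (by omega) (by omega)
          have htq : E.take (1 + q.length) = true :: q := by
            rw [show (1 : ℕ) + q.length = (true :: q).length by simp; omega]
            exact (List.prefix_iff_eq_take.mp hpre).symm
          rw [htq] at hs1
          simp [List.count_cons] at hs1
          omega
      have hwG : w = ([true, false] ++ C) ++ ([true] ++ (B ++ [false])) := by
        rw [hw2', hDCE, hEc, hE1B]
        simp
      have hBne : B ≠ [] := by
        intro hBnil
        have hw0 : w = ([true, false] ++ C) ++ [true, false] := by
          rw [hwG, hBnil]
          rfl
        have hl2 := hlast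
        rw [hw0, aux_peaks_G0 hC, List.getLast?_append] at hl2
        simp at hl2
        omega
      have hpeaks : peakHeights w = (1 :: peakHeights C) ++ (peakHeights B).map (· + 1) := by
        conv_lhs => rw [hwG]
        exact aux_peaks_G hC hB hBne
      have hpBne := aux_peaks_ne_nil hB hBne
      have hBlast : (peakHeights B).getLast? = some j := by
        cases hgl : (peakHeights B).getLast? with
        | none => exact absurd (List.getLast?_eq_none_iff.mp hgl) hpBne
        | some y =>
          rw [hpeaks, List.getLast?_append, List.getLast?_map, hgl] at hlast
          simp at hlast
          have hyj : y = j := by omega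
          rw [hyj]
      refine ⟨(C, B), ⟨hC, hB, hBne, hBlast, ?_⟩, hwG.symm⟩
      show List.count true C + List.count true B = n - 2
      have h1 := hcnt
      rw [hwG] at h1
      simp [List.count_append] at h1
      omega
    · rintro ⟨⟨C, B⟩, ⟨hC, hB, hBne, hBlast, hcnt⟩, rfl⟩
      have hC' : IsDyckWord C := hC
      have hB' : IsDyckWord B := hB
      have hBne' : B ≠ [] := hBne
      have hBlast' : (peakHeights B).getLast? = some j := hBlast
      have hcnt' : List.count true C + List.count true B = n - 2 := hcnt
      clear hC hB hBne hBlast hcnt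
      refine ⟨aux_dyck_G hC' hB', ?_, ?_, ?_⟩
      · simp [List.count_append]
        omega
      · rw [aux_peaks_G hC' hB' hBne']
        rfl
      · rw [aux_peaks_G hC' hB' hBne', List.getLast?_append, List.getLast?_map, hBlast']
        rfl
  have hFinj : Set.InjOn (fun cb : List Bool × List Bool =>
      ([true, true, false] ++ (cb.1 ++ [false])) ++ cb.2) P := by
    rintro ⟨C, B⟩ h1 ⟨C', B'⟩ h2 he
    simp only at he
    have he' : C ++ ([false] ++ B) = C' ++ ([false] ++ B') := by
      rw [List.append_assoc, List.append_assoc] at he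
      have := List.append_cancel_left he
      simpa using this
    obtain ⟨e1, e2⟩ := aux_sep h1.1 h2.1 he'
    simp [Prod.ext_iff]; exact ⟨e1, e2⟩
  have hGinj : Set.InjOn (fun cb : List Bool × List Bool =>
      ([true, false] ++ cb.1) ++ ([true] ++ (cb.2 ++ [false]))) P := by
    rintro ⟨C, B⟩ h1 ⟨C', B'⟩ h2 he
    simp only at he
    have he' : C ++ ([true] ++ (B ++ [false])) = C' ++ ([true] ++ (B' ++ [false])) := by
      rw [List.append_assoc, List.append_assoc] at he
      have := List.append_cancel_left he
      simpa using this
    obtain ⟨e1, e2⟩ := aux_sep2 h1.1 h2.1 h1.2.1 h2.2.1 he'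
    simp [Prod.ext_iff]; exact ⟨e1, e2⟩
  rw [hFeq, hGeq, Set.ncard_image_of_injOn hFinj, Set.ncard_image_of_injOn hGinj]
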